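/- Let p be prime and k a field of characteristic p. Let 0 ≤ a < p − 1 and let D(a) ∈ M_{2p}(k[s,t]) be the block upper-triangular matrix [[B(2p−a−2), D'(a)],[0, B(a)†]], where B(μ) is the tridiagonal matrix with (i,j) entry −i t² if i=j+1, (μ−2i)st if i=j, (μ−i)s² if i=j−1; D'(a) is the (2p−a−1)×(a+1) matrix with (i,j) entry (1/(i+1))·s² if i − j = p − a − 2, (1/(a+1))·t² if (i,j) = (p, a), and 0 otherwise; and B(a)† is obtained from B(a) by transposing and swapping s and t. Then the inclusion of k[s,t]^{2p−a−1} into k[s,t]^{2p} as the top coordinates induces an isomorphism ker B(2p−a−2) ≅ ker D(a). -/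
import Mathlib


open MvPolynomial

variable (k : Type*) [Field k]

/-- The `(I,J)` entry of the tridiagonal matrix `B(μ)` over `k[s,t]` (`s = X 0`, `t = X 1`):
`−I·t²` if `I = J+1`, `(μ−2I)·st` if `I = J`, `(μ−I)·s²` if `J = I+1`. -/
noncomputable def bEntry (μ I J : ℕ) : MvPolynomial (Fin 2) k :=
  if I = J + 1 then ((-(I : ℤ) : ℤ) : MvPolynomial (Fin 2) k) * X 1 ^ 2
  else if I = J then (((μ : ℤ) - 2 * I : ℤ) : MvPolynomial (Fin 2) k) * (X 0 * X 1)
  else if J = I + 1 then (((μ : ℤ) - I : ℤ) : MvPolynomial (Fin 2) k) * X 0 ^ 2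
  else 0

/-- The `(I,J)` entry of `B(a)†`, the transpose of `B(a)` with the variables `s` and `t`
swapped. -/
noncomputable def bDagEntry (a I J : ℕ) : MvPolynomial (Fin 2) k :=
  if J = I + 1 then ((-(J : ℤ) : ℤ) : MvPolynomial (Fin 2) k) * X 0 ^ 2
  else if I = J then (((a : ℤ) - 2 * I : ℤ) : MvPolynomial (Fin 2) k) * (X 0 * X 1)
  else if I = J + 1 then (((a : ℤ) - J : ℤ) : MvPolynomial (Fin 2) k) * X 1 ^ 2
  else 0

/-- The `(λ+1)×(λ+1)` matrix `B(λ)` over `k[s,t]`. -/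
noncomputable def Bmat (l : ℕ) :
    Matrix (Fin (l + 1)) (Fin (l + 1)) (MvPolynomial (Fin 2) k) :=
  Matrix.of fun i j => bEntry k l (i : ℕ) (j : ℕ)

/-- The block matrix `D(a) = [[B(2p−a−2), D'(a)], [0, B(a)†]]` of size `2p`, where the
`(i, j')` entry of `D'(a)` is `s²/(i+1)` if `i − j' = p − a − 2`, `t²/(a+1)` if
`(i, j') = (p, a)`, and `0` otherwise. -/
noncomputable def Dmat (p a : ℕ) :
    Matrix (Fin (2 * p)) (Fin (2 * p)) (MvPolynomial (Fin 2) k) :=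
  Matrix.of fun i j =>
    if (i : ℕ) < 2 * p - a - 2 + 1 then
      if (j : ℕ) < 2 * p - a - 2 + 1 then bEntry k (2 * p - a - 2) (i : ℕ) (j : ℕ)
      else
        if (i : ℕ) = ((j : ℕ) - (2 * p - a - 2 + 1)) + (p - a - 2) then
          MvPolynomial.C ((((i : ℕ) + 1 : ℕ) : k))⁻¹ * X 0 ^ 2
        else if (i : ℕ) = p ∧ (j : ℕ) - (2 * p - a - 2 + 1) = a then
          MvPolynomial.C (((a + 1 : ℕ) : k))⁻¹ * X 1 ^ 2
        else 0
    else
      if (j : ℕ) < 2 * p - a - 2 + 1 then 0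
      else bDagEntry k a ((i : ℕ) - (2 * p - a - 2 + 1)) ((j : ℕ) - (2 * p - a - 2 + 1))

/-- The inclusion of `k[s,t]^{2p−a−1}` into `k[s,t]^{2p}` as the top coordinates. -/
noncomputable def pad (p a : ℕ) :
    (Fin (2 * p - a - 2 + 1) → MvPolynomial (Fin 2) k) →ₗ[MvPolynomial (Fin 2) k]
      (Fin (2 * p) → MvPolynomial (Fin 2) k) :=
  LinearMap.pi fun i : Fin (2 * p) =>
    if h : (i : ℕ) < 2 * p - a - 2 + 1 then LinearMap.proj (⟨(i : ℕ), h⟩ : Fin (2 * p - a - 2 + 1))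
    else 0

lemma sum_ite_three {A : Type*} [AddCommMonoid A] (n i₁ i₂ i₃ : ℕ) (g : ℕ → A)
    (h : ∀ r, r < n → g r = (if r = i₁ then g i₁ else 0) +
      ((if r = i₂ then g i₂ else 0) + (if r = i₃ then g i₃ else 0))) :
    ∑ r ∈ Finset.range n, g r =
      (if i₁ < n then g i₁ else 0) + ((if i₂ < n then g i₂ else 0) + (if i₃ < n then g i₃ else 0)) := by
  rw [Finset.sum_congr rfl (fun r hr => h r (Finset.mem_range.mp hr))]
  rw [Finset.sum_add_distrib, Finset.sum_add_distrib,
    Finset.sum_ite_eq' (Finset.range n) i₁ (fun _ => g i₁),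
    Finset.sum_ite_eq' (Finset.range n) i₂ (fun _ => g i₂),
    Finset.sum_ite_eq' (Finset.range n) i₃ (fun _ => g i₃)]
  simp [Finset.mem_range]

lemma bEntry_zero {I J : ℕ} (μ : ℕ) (h1 : I ≠ J + 1) (h2 : I ≠ J) (h3 : J ≠ I + 1) :
    bEntry k μ I J = 0 := by
  rw [bEntry, if_neg h1, if_neg h2, if_neg h3]

lemma bEntry_sub (μ J : ℕ) :
    bEntry k μ (J + 1) J = ((-((J+1 : ℕ) : ℤ) : ℤ) : MvPolynomial (Fin 2) k) * X 1 ^ 2 := by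
  rw [bEntry, if_pos rfl]

lemma bEntry_diag (μ J : ℕ) :
    bEntry k μ J J = (((μ : ℤ) - 2 * (J : ℤ) : ℤ) : MvPolynomial (Fin 2) k) * (X 0 * X 1) := by
  rw [bEntry, if_neg (by omega), if_pos rfl]

lemma bEntry_sup (μ J : ℕ) :
    bEntry k μ J (J + 1) = (((μ : ℤ) - (J : ℤ) : ℤ) : MvPolynomial (Fin 2) k) * X 0 ^ 2 := by
  rw [bEntry, if_neg (by omega), if_neg (by omega), if_pos rfl]

lemma bDag_zero {I J : ℕ} (a : ℕ) (h1 : J ≠ I + 1) (h2 : I ≠ J) (h3 : I ≠ J + 1) :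
    bDagEntry k a I J = 0 := by
  rw [bDagEntry, if_neg h1, if_neg h2, if_neg h3]

lemma bDag_sup (a I : ℕ) :
    bDagEntry k a I (I + 1) = ((-((I+1 : ℕ) : ℤ) : ℤ) : MvPolynomial (Fin 2) k) * X 0 ^ 2 := by
  rw [bDagEntry, if_pos rfl]

lemma bDag_diag (a I : ℕ) :
    bDagEntry k a I I = (((a : ℤ) - 2 * (I : ℤ) : ℤ) : MvPolynomial (Fin 2) k) * (X 0 * X 1) := by
  rw [bDagEntry, if_neg (by omega), if_pos rfl]

lemma bDag_sub (a I : ℕ) :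
    bDagEntry k a (I + 1) I = (((a : ℤ) - (I : ℤ) : ℤ) : MvPolynomial (Fin 2) k) * X 1 ^ 2 := by
  rw [bDagEntry, if_neg (by omega), if_neg (by omega), if_pos rfl]

lemma choose_fact (n q : ℕ) :
    ((q : ℤ) + 1) * (n.choose (q + 1) : ℤ) = ((n : ℤ) - q) * (n.choose q : ℤ) := by
  rcases le_or_gt (q + 1) n with h | h
  · have h0 := Nat.choose_succ_right_eq n q
    have hq : q ≤ n := by omega
    have h2 : (n.choose (q+1) : ℤ) * ((q:ℤ)+1) = (n.choose q : ℤ) * ((n:ℤ) - q) := by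
      have := congrArg (Nat.cast : ℕ → ℤ) h0
      push_cast [Nat.cast_sub hq] at this
      linarith
    linarith
  · rw [Nat.choose_eq_zero_of_lt h]
    rcases eq_or_lt_of_le (Nat.lt_succ_iff.mp h) with h2 | h2
    · subst h2; simp
    · rw [Nat.choose_eq_zero_of_lt h2]; simp

lemma intCast_congr (p : ℕ) [CharP k p] (x y : ℤ) (h : (p : ℤ) ∣ x - y) :
    ((x : ℤ) : MvPolynomial (Fin 2) k) = ((y : ℤ) : MvPolynomial (Fin 2) k) := by
  have := (CharP.intCast_eq_zero_iff (MvPolynomial (Fin 2) k) p (x - y)).mpr h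
  push_cast at this
  exact sub_eq_zero.mp this

noncomputable def mrow (p a : ℕ) : ℕ → MvPolynomial (Fin 2) k := fun i =>
  if p ≤ i then C ((((p - a - 2).choose (i - p) : ℕ)) : k) * X 0 ^ (i - p) * X 1 ^ (p - a - 2 - (i - p))
  else 0

lemma mrow_lt {p a i : ℕ} (h : i < p) : mrow k p a i = 0 := by
  rw [mrow, if_neg (by omega)]

lemma mrow_add (p a m : ℕ) :
    mrow k p a (p + m) = C ((((p - a - 2).choose m : ℕ)) : k) * X 0 ^ m * X 1 ^ (p - a - 2 - m) := by
  rw [mrow, if_pos (by omega)]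
  simp

lemma mrow_big {p a i : ℕ} (h : p - a - 2 < i - p) : mrow k p a i = 0 := by
  rw [mrow]
  split_ifs with hp
  · rw [Nat.choose_eq_zero_of_lt h]; simp
  · rfl

lemma mrow_leftnull {p a : ℕ} (hp : p.Prime) (hchar : CharP k p) (ha : a < p - 1)
    (j : ℕ) (hj : j < 2 * p - a - 2 + 1) :
    ∑ i ∈ Finset.range (2 * p - a - 2 + 1), mrow k p a i * bEntry k (2 * p - a - 2) i j = 0 := by
  haveI := hchar
  have hp2 : 2 ≤ p := hp.two_le
  have hap : a + 2 ≤ p := by omega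
  have hp0 : ((p : ℕ) : MvPolynomial (Fin 2) k) = 0 := by
    exact_mod_cast CharP.cast_eq_zero (MvPolynomial (Fin 2) k) p
  by_cases hA : j + 1 < p
  · apply Finset.sum_eq_zero
    intro r hr
    rcases lt_or_ge r p with h | h
    · rw [mrow_lt k h, zero_mul]
    · rw [bEntry_zero k _ (by omega) (by omega) (by omega), mul_zero]
  by_cases hB : j + 1 = p
  · apply Finset.sum_eq_zero
    intro r hr
    rcases lt_or_ge r p with h | h
    · rw [mrow_lt k h, zero_mul]
    · by_cases h2 : r = p
      · rw [h2, ← hB, bEntry_sub]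
        have : ((-((j+1 : ℕ) : ℤ) : ℤ) : MvPolynomial (Fin 2) k) = ((0 : ℤ) : MvPolynomial (Fin 2) k) :=
          intCast_congr k p _ _ ⟨-1, by omega⟩
        rw [this]
        simp
      · rw [bEntry_zero k _ (by omega) (by omega) (by omega), mul_zero]
  -- now p ≤ j
  have hpj : p ≤ j := by omega
  have hq : j - p ≤ p - a - 2 := by omega
  obtain ⟨q, rfl⟩ : ∃ q, j = p + q := ⟨j - p, by omega⟩
  obtain ⟨d, hd⟩ : ∃ d, p - a - 2 = q + d := ⟨p - a - 2 - q, by omega⟩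
  rcases q with _ | q'
  · -- j = p
    simp only [Nat.add_zero, Nat.zero_add] at hd ⊢
    have hsupp : ∀ r, r < 2*p-a-2+1 →
        mrow k p a r * bEntry k (2*p-a-2) r p =
        (if r = 2*p-a-2+1 then mrow k p a (2*p-a-2+1) * bEntry k (2*p-a-2) (2*p-a-2+1) p else 0) +
        ((if r = p then mrow k p a p * bEntry k (2*p-a-2) p p else 0) +
         (if r = p+1 then mrow k p a (p+1) * bEntry k (2*p-a-2) (p+1) p else 0)) := by
      intro r hr
      by_cases h2 : r = p
      · rw [if_neg (by omega), if_pos h2, if_neg (by omega), h2]; ring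
      by_cases h3 : r = p + 1
      · rw [if_neg (by omega), if_neg (by omega), if_pos h3, h3]; ring
      rw [if_neg (by omega), if_neg h2, if_neg h3]
      have hz : mrow k p a r * bEntry k (2*p-a-2) r p = 0 := by
        rcases lt_or_ge r p with h | h
        · rw [mrow_lt k h, zero_mul]
        · rw [bEntry_zero k _ (by omega) (by omega) (by omega), mul_zero]
      rw [hz]; ring
    rw [sum_ite_three _ _ _ _ _ hsupp, if_neg (by omega), if_pos (by omega)]
    have mp0 : mrow k p a p = C (((p-a-2).choose 0 : ℕ) : k) * X 0 ^ 0 * X 1 ^ (p-a-2-0) := by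
      simpa using mrow_add k p a 0
    rcases Nat.eq_zero_or_pos d with hd0 | hd0
    · rw [if_neg (by omega)]
      rw [mp0, bEntry_diag]
      have c0 : ((((2*p-a-2 : ℕ) : ℤ) - 2*((p:ℕ):ℤ) : ℤ) : MvPolynomial (Fin 2) k)
          = ((0 : ℤ) : MvPolynomial (Fin 2) k) := intCast_congr k p _ _ ⟨-1, by omega⟩
      rw [c0]; simp
    · obtain ⟨e, rfl⟩ : ∃ e, d = e + 1 := ⟨d - 1, by omega⟩
      rw [if_pos (by omega)]
      have mp1 : mrow k p a (p+1) = C (((p-a-2).choose 1 : ℕ) : k) * X 0 ^ 1 * X 1 ^ (p-a-2-1) :=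
        mrow_add k p a 1
      rw [mp0, mp1, bEntry_diag, bEntry_sub, Nat.choose_zero_right, Nat.choose_one_right]
      have c1 : ((((2*p-a-2 : ℕ) : ℤ) - 2*((p:ℕ):ℤ) : ℤ) : MvPolynomial (Fin 2) k)
          = ((((p-a-2 : ℕ)) : ℤ) : MvPolynomial (Fin 2) k) := intCast_congr k p _ _ ⟨-1, by omega⟩
      have c2 : ((-(((p+1 : ℕ)) : ℤ) : ℤ) : MvPolynomial (Fin 2) k)
          = ((-1 : ℤ) : MvPolynomial (Fin 2) k) := intCast_congr k p _ _ ⟨-1, by omega⟩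
      rw [c1, c2, hd]
      simp only [Nat.add_sub_cancel, Nat.sub_zero, map_natCast]
      push_cast
      ring
  · -- j = p + (q'+1)
    rw [show p + (q'+1) = p + q' + 1 from by omega] at hj ⊢
    have hsupp : ∀ r, r < 2*p-a-2+1 →
        mrow k p a r * bEntry k (2*p-a-2) r (p+q'+1) =
        (if r = p+q' then mrow k p a (p+q') * bEntry k (2*p-a-2) (p+q') (p+q'+1) else 0) +
        ((if r = p+q'+1 then mrow k p a (p+q'+1) * bEntry k (2*p-a-2) (p+q'+1) (p+q'+1) else 0) +
         (if r = p+q'+1+1 then mrow k p a (p+q'+1+1) * bEntry k (2*p-a-2) (p+q'+1+1) (p+q'+1) else 0)) := by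
      intro r hr
      by_cases h1 : r = p+q'
      · rw [if_pos h1, if_neg (by omega), if_neg (by omega), h1]; ring
      by_cases h2 : r = p+q'+1
      · rw [if_neg (by omega), if_pos h2, if_neg (by omega), h2]; ring
      by_cases h3 : r = p+q'+1+1
      · rw [if_neg (by omega), if_neg (by omega), if_pos h3, h3]; ring
      rw [if_neg h1, if_neg h2, if_neg h3]
      have hz : mrow k p a r * bEntry k (2*p-a-2) r (p+q'+1) = 0 := by
        rcases lt_or_ge r p with h | h
        · rw [mrow_lt k h, zero_mul]
        · rw [bEntry_zero k _ (by omega) (by omega) (by omega), mul_zero]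
      rw [hz]; ring
    rw [sum_ite_three _ _ _ _ _ hsupp, if_pos (by omega), if_pos (by omega)]
    have mA : mrow k p a (p+q') = C (((p-a-2).choose q' : ℕ) : k) * X 0 ^ q' * X 1 ^ (p-a-2-q') :=
      mrow_add k p a q'
    have mB : mrow k p a (p+q'+1)
        = C (((p-a-2).choose (q'+1) : ℕ) : k) * X 0 ^ (q'+1) * X 1 ^ (p-a-2-(q'+1)) := by
      rw [show p+q'+1 = p+(q'+1) from by omega]; exact mrow_add k p a (q'+1)
    have mC : mrow k p a (p+q'+1+1)
        = C (((p-a-2).choose (q'+2) : ℕ) : k) * X 0 ^ (q'+2) * X 1 ^ (p-a-2-(q'+2)) := by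
      rw [show p+q'+1+1 = p+(q'+2) from by omega]; exact mrow_add k p a (q'+2)
    have f1 := congrArg (fun z : ℤ => (z : MvPolynomial (Fin 2) k)) (choose_fact (p-a-2) q')
    have f2 := congrArg (fun z : ℤ => (z : MvPolynomial (Fin 2) k)) (choose_fact (p-a-2) (q'+1))
    push_cast at f1 f2
    rcases Nat.eq_zero_or_pos d with hd0 | hd0
    · subst hd0
      have hn : ((p-a-2 : ℕ) : MvPolynomial (Fin 2) k) = (q' : MvPolynomial (Fin 2) k) + 1 := by
        exact_mod_cast congrArg (Nat.cast : ℕ → MvPolynomial (Fin 2) k) hd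
      rw [if_neg (by omega), mA, mB, bEntry_sup, bEntry_diag]
      have c1 : ((((2*p-a-2 : ℕ) : ℤ) - ((p+q' : ℕ):ℤ) : ℤ) : MvPolynomial (Fin 2) k)
          = ((1 : ℤ) : MvPolynomial (Fin 2) k) := intCast_congr k p _ _ ⟨0, by omega⟩
      have c2 : ((((2*p-a-2 : ℕ) : ℤ) - 2*((p+q'+1 : ℕ):ℤ) : ℤ) : MvPolynomial (Fin 2) k)
          = ((-((q':ℤ)+1) : ℤ) : MvPolynomial (Fin 2) k) := intCast_congr k p _ _ ⟨-1, by omega⟩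
      rw [c1, c2, show p-a-2-q' = 1 from by omega, show p-a-2-(q'+1) = 0 from by omega]
      simp only [map_natCast]
      push_cast
      linear_combination (-(X 0^(q'+2) * X 1)) * f1
        - (X 0^(q'+2) * X 1) * ((p-a-2).choose q' : MvPolynomial (Fin 2) k) * hn
    · obtain ⟨e, rfl⟩ : ∃ e, d = e + 1 := ⟨d - 1, by omega⟩
      have hn : ((p-a-2 : ℕ) : MvPolynomial (Fin 2) k)
          = (q' : MvPolynomial (Fin 2) k) + 1 + ((e : MvPolynomial (Fin 2) k) + 1) := by
        exact_mod_cast congrArg (Nat.cast : ℕ → MvPolynomial (Fin 2) k) hd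
      rw [if_pos (by omega), mA, mB, mC, bEntry_sup, bEntry_diag, bEntry_sub]
      have c1 : ((((2*p-a-2 : ℕ) : ℤ) - ((p+q' : ℕ):ℤ) : ℤ) : MvPolynomial (Fin 2) k)
          = (((e:ℤ)+2 : ℤ) : MvPolynomial (Fin 2) k) := intCast_congr k p _ _ ⟨0, by omega⟩
      have c2 : ((((2*p-a-2 : ℕ) : ℤ) - 2*((p+q'+1 : ℕ):ℤ) : ℤ) : MvPolynomial (Fin 2) k)
          = (((e:ℤ) - (q':ℤ) : ℤ) : MvPolynomial (Fin 2) k) := intCast_congr k p _ _ ⟨-1, by omega⟩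
      have c3 : ((-(((p+q'+1+1 : ℕ)) : ℤ) : ℤ) : MvPolynomial (Fin 2) k)
          = ((-((q':ℤ)+2) : ℤ) : MvPolynomial (Fin 2) k) := intCast_congr k p _ _ ⟨-1, by omega⟩
      rw [c1, c2, c3, show p-a-2-q' = e+2 from by omega, show p-a-2-(q'+1) = e+1 from by omega,
        show p-a-2-(q'+2) = e from by omega]
      simp only [map_natCast]
      push_cast
      linear_combination (-(X 0^(q'+2) * X 1^(e+2))) * f1 - (X 0^(q'+2) * X 1^(e+2)) * f2
        - (X 0^(q'+2) * X 1^(e+2)) * (((p-a-2).choose q' : MvPolynomial (Fin 2) k)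
          + ((p-a-2).choose (q'+1) : MvPolynomial (Fin 2) k)) * hn

noncomputable def dEntry (p a : ℕ) (i j : ℕ) : MvPolynomial (Fin 2) k :=
  if i < 2 * p - a - 2 + 1 then
    if j < 2 * p - a - 2 + 1 then bEntry k (2 * p - a - 2) i j
    else
      if i = (j - (2 * p - a - 2 + 1)) + (p - a - 2) then
        MvPolynomial.C (((i + 1 : ℕ) : k))⁻¹ * X 0 ^ 2
      else if i = p ∧ j - (2 * p - a - 2 + 1) = a then
        MvPolynomial.C (((a + 1 : ℕ) : k))⁻¹ * X 1 ^ 2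
      else 0
  else
    if j < 2 * p - a - 2 + 1 then 0
    else bDagEntry k a (i - (2 * p - a - 2 + 1)) (j - (2 * p - a - 2 + 1))

lemma dEntry_tl {p a i j : ℕ} (hi : i < 2*p-a-2+1) (hj : j < 2*p-a-2+1) :
    dEntry k p a i j = bEntry k (2*p-a-2) i j := by
  rw [dEntry, if_pos hi, if_pos hj]

lemma dEntry_bl {p a i j : ℕ} (hi : ¬ i < 2*p-a-2+1) (hj : j < 2*p-a-2+1) :
    dEntry k p a i j = 0 := by
  rw [dEntry, if_neg hi, if_pos hj]

lemma dEntry_br {p a i j : ℕ} (hi : ¬ i < 2*p-a-2+1) (hj : ¬ j < 2*p-a-2+1) :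
    dEntry k p a i j = bDagEntry k a (i - (2*p-a-2+1)) (j - (2*p-a-2+1)) := by
  rw [dEntry, if_neg hi, if_neg hj]

lemma dEntry_tr {p a i j : ℕ} (hi : i < 2*p-a-2+1) (hj : ¬ j < 2*p-a-2+1) :
    dEntry k p a i j =
      if i = (j - (2 * p - a - 2 + 1)) + (p - a - 2) then
        MvPolynomial.C (((i + 1 : ℕ) : k))⁻¹ * X 0 ^ 2
      else if i = p ∧ j - (2 * p - a - 2 + 1) = a then
        MvPolynomial.C (((a + 1 : ℕ) : k))⁻¹ * X 1 ^ 2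
      else 0 := by
  rw [dEntry, if_pos hi, if_neg hj]

noncomputable def extN (n : ℕ) (w : Fin n → MvPolynomial (Fin 2) k) : ℕ → MvPolynomial (Fin 2) k :=
  fun j => if h : j < n then w ⟨j, h⟩ else 0

lemma extN_coe {n : ℕ} (w : Fin n → MvPolynomial (Fin 2) k) (j : Fin n) :
    extN k n w ↑j = w j := by
  rw [extN, dif_pos j.2, Fin.eta]

lemma extN_ge {n j : ℕ} (w : Fin n → MvPolynomial (Fin 2) k) (h : n ≤ j) :
    extN k n w j = 0 := dif_neg (by omega)

lemma mulVec_row {n : ℕ} (M : Matrix (Fin n) (Fin n) (MvPolynomial (Fin 2) k))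
    (E : ℕ → ℕ → MvPolynomial (Fin 2) k) (hME : ∀ i j : Fin n, M i j = E ↑i ↑j)
    (w : Fin n → MvPolynomial (Fin 2) k) (i : Fin n) :
    M.mulVec w i = ∑ j ∈ Finset.range n, E ↑i j * extN k n w j := by
  simp only [Matrix.mulVec, dotProduct]
  rw [← Fin.sum_univ_eq_sum_range (fun j => E ↑i j * extN k n w j) n]
  exact Finset.sum_congr rfl fun j _ => by rw [hME, extN_coe]


/-- The inclusion as the top `2p − a − 1` coordinates identifies `ker B(2p−a−2)` with
`ker D(a)`: for `p` prime, `char k = p`, `0 ≤ a < p − 1`. -/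
theorem ker_Dmat_eq_map_ker_Bmat {p a : ℕ} (hp : p.Prime) (hchar : CharP k p)
    (ha : a < p - 1) :
    Submodule.map (pad k p a) (LinearMap.ker (Bmat k (2 * p - a - 2)).mulVecLin)
      = LinearMap.ker (Dmat k p a).mulVecLin := by
  haveI := hchar
  have hp2 : 2 ≤ p := hp.two_le
  have hap : a + 2 ≤ p := by omega
  have hN2p : 2 * p - a - 2 + 1 ≤ 2 * p := by omega
  have hpad : ∀ (v : Fin (2*p-a-2+1) → MvPolynomial (Fin 2) k) (i : Fin (2*p)),
      pad k p a v i = if h : (i:ℕ) < 2*p-a-2+1 then v ⟨(i:ℕ), h⟩ else 0 := by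
    intro v i
    rw [pad, LinearMap.pi_apply]
    by_cases h : (i:ℕ) < 2*p-a-2+1
    · rw [dif_pos h, dif_pos h]; rfl
    · rw [dif_neg h, dif_neg h]; rfl
  apply le_antisymm
  · -- forward inclusion
    rintro w hw
    obtain ⟨v, hv, rfl⟩ := Submodule.mem_map.mp hw
    rw [LinearMap.mem_ker, Matrix.mulVecLin_apply] at hv ⊢
    funext i
    rw [mulVec_row k (Dmat k p a) (dEntry k p a) (fun _ _ => rfl) _ i]
    have hPV : ∀ j, j < 2*p → extN k (2*p) (pad k p a v) j = extN k (2*p-a-2+1) v j := by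
      intro j hj
      rw [extN, dif_pos hj, hpad]
      by_cases h : j < 2*p-a-2+1
      · rw [dif_pos h, extN, dif_pos h]
      · rw [dif_neg h, extN, dif_neg h]
    rw [Finset.sum_congr rfl (fun j hj => by
      rw [hPV j (Finset.mem_range.mp hj)])]
    by_cases hi : (i:ℕ) < 2*p-a-2+1
    · rw [← Finset.sum_subset (Finset.range_subset_range.mpr hN2p) (fun x _ hx => by
        rw [extN_ge k v (by simpa using hx), mul_zero])]
      have h0 := congrFun hv ⟨(i:ℕ), hi⟩
      rw [mulVec_row k (Bmat k (2*p-a-2)) (bEntry k (2*p-a-2)) (fun _ _ => rfl) v ⟨(i:ℕ), hi⟩] at h0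
      rw [Finset.sum_congr rfl (fun j hj => by
        rw [dEntry_tl k hi (Finset.mem_range.mp hj)])]
      exact h0
    · apply Finset.sum_eq_zero
      intro j hj
      by_cases hjN : j < 2*p-a-2+1
      · rw [dEntry_bl k hi hjN, zero_mul]
      · rw [extN_ge k v (by omega), mul_zero]
  · -- reverse inclusion
    intro w hw
    rw [LinearMap.mem_ker, Matrix.mulVecLin_apply] at hw
    have hrowN : ∀ i', i' < 2*p →
        ∑ j ∈ Finset.range (2*p), dEntry k p a i' j * extN k (2*p) w j = 0 := by
      intro i' hi'
      have h0 := congrFun hw ⟨i', hi'⟩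
      rw [mulVec_row k (Dmat k p a) (dEntry k p a) (fun _ _ => rfl) w ⟨i', hi'⟩] at h0
      exact h0
    -- bottom block equations
    have hbot : ∀ I, I ≤ a → ∑ J ∈ Finset.range (a+1),
        bDagEntry k a I J * extN k (2*p) w (2*p-a-2+1+J) = 0 := by
      intro I hI
      have h0 := hrowN (2*p-a-2+1+I) (by omega)
      rw [Finset.range_eq_Ico, ← Finset.sum_Ico_consecutive _ (Nat.zero_le (2*p-a-2+1)) hN2p] at h0
      have hz : ∑ j ∈ Finset.Ico 0 (2*p-a-2+1),
          dEntry k p a (2*p-a-2+1+I) j * extN k (2*p) w j = 0 :=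
        Finset.sum_eq_zero fun j hj => by
          rw [dEntry_bl k (by omega) (Finset.mem_Ico.mp hj).2, zero_mul]
      rw [hz, zero_add, Finset.sum_Ico_eq_sum_range,
        show 2*p - (2*p-a-2+1) = a+1 from by omega] at h0
      rw [← h0]
      refine Finset.sum_congr rfl fun J hJ => ?_
      rw [dEntry_br k (by omega) (by omega),
        show 2*p-a-2+1+I - (2*p-a-2+1) = I from by omega,
        show 2*p-a-2+1+J - (2*p-a-2+1) = J from by omega]
    -- the left functional kills everything except the last bottom coordinate
    have hcol : ∀ j, j < 2*p →
        (∑ i ∈ Finset.range (2*p), mrow k p a i * dEntry k p a i j)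
          = if j = 2*p-a-2+1+a then mrow k p a p * (MvPolynomial.C (((a+1:ℕ)):k)⁻¹ * X 1^2) else 0 := by
      intro j hj
      by_cases hjN : j < 2*p-a-2+1
      · rw [if_neg (by omega)]
        rw [← Finset.sum_subset (Finset.range_subset_range.mpr hN2p) (fun x hx hnx => by
          rw [dEntry_bl k (by simpa using hnx) hjN, mul_zero])]
        rw [Finset.sum_congr rfl (fun i hi => by
          rw [dEntry_tl k (Finset.mem_range.mp hi) hjN])]
        exact mrow_leftnull k hp hchar ha j hjN
      · have hJa : j - (2*p-a-2+1) ≤ a := by omega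
        rw [Finset.sum_eq_single_of_mem p (Finset.mem_range.mpr (by omega)) ?_]
        · rw [dEntry_tr k (by omega) hjN, if_neg (by omega)]
          by_cases hja : j - (2*p-a-2+1) = a
          · rw [if_pos ⟨rfl, hja⟩, if_pos (by omega)]
          · rw [if_neg (by exact fun hc => hja hc.2), if_neg (by omega), mul_zero]
        · intro b hb hbp
          rcases lt_or_ge b p with h | h
          · rw [mrow_lt k h, zero_mul]
          rcases lt_or_ge b (2*p-a-2+1) with h2 | h2
          · rw [dEntry_tr k h2 hjN, if_neg (by omega),
              if_neg (by exact fun hc => hbp hc.1), mul_zero]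
          · rw [mrow_big k (by omega), zero_mul]
    have hMsum : ∑ i ∈ Finset.range (2*p), mrow k p a i *
        (∑ j ∈ Finset.range (2*p), dEntry k p a i j * extN k (2*p) w j) = 0 :=
      Finset.sum_eq_zero fun i hi => by rw [hrowN i (Finset.mem_range.mp hi), mul_zero]
    have hswap : ∑ j ∈ Finset.range (2*p),
        (∑ i ∈ Finset.range (2*p), mrow k p a i * dEntry k p a i j) * extN k (2*p) w j = 0 := by
      rw [← hMsum]
      rw [Finset.sum_congr rfl (fun j _ => Finset.sum_mul _ _ _), Finset.sum_comm]
      exact Finset.sum_congr rfl fun i _ => by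
        rw [Finset.mul_sum]
        exact Finset.sum_congr rfl fun j _ => by ring
    have hfin : mrow k p a p * (MvPolynomial.C (((a+1:ℕ)):k)⁻¹ * X 1^2)
        * extN k (2*p) w (2*p-a-2+1+a) = 0 := by
      rw [Finset.sum_congr rfl (fun j hj => by
        rw [hcol j (Finset.mem_range.mp hj), ite_mul, zero_mul]) ] at hswap
      rw [Finset.sum_ite_eq' (Finset.range (2*p)) (2*p-a-2+1+a)
        (fun j => mrow k p a p * (MvPolynomial.C (((a+1:ℕ)):k)⁻¹ * X 1^2) * extN k (2*p) w j),
        if_pos (Finset.mem_range.mpr (by omega))] at hswap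
      exact hswap
    have hka : ((a+1 : ℕ) : k) ≠ 0 := by
      intro h0
      have := (CharP.cast_eq_zero_iff k p (a+1)).mp h0
      have := Nat.le_of_dvd (by omega) this
      omega
    have hE0 : mrow k p a p * (MvPolynomial.C (((a+1:ℕ)):k)⁻¹ * X 1^2) ≠ 0 := by
      have h1 : mrow k p a p
          = C (((p-a-2).choose 0 : ℕ) : k) * X 0 ^ 0 * X 1 ^ (p-a-2-0) := by
        simpa using mrow_add k p a 0
      rw [h1, Nat.choose_zero_right]
      simp only [Nat.cast_one, map_one, one_mul, pow_zero]
      exact mul_ne_zero (pow_ne_zero _ (X_ne_zero _))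
        (mul_ne_zero (fun hC => hka (by
          have := (MvPolynomial.C_eq_zero).mp hC
          exact absurd (inv_eq_zero.mp this) hka))
          (pow_ne_zero _ (X_ne_zero _)))
    have hca : extN k (2*p) w (2*p-a-2+1+a) = 0 :=
      (mul_eq_zero.mp hfin).resolve_left hE0
    -- triangular recursion in the bottom block
    have hcJ : ∀ J, J ≤ a → X 0 ^ (J+1) * extN k (2*p) w (2*p-a-2+1+J)
        = C ((a.choose J : ℕ) : k)
          * (X 0 * X 1 ^ J * extN k (2*p) w (2*p-a-2+1+0)) := by
      intro J
      induction J using Nat.strong_induction_on with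
      | _ J IH =>
        intro hJ
        match J, hJ, IH with
        | 0, hJ, IH =>
          simp [Nat.choose_zero_right]
        | 1, hJ, IH =>
          -- extract row 0 of the dagger block
          have ha1 : 1 ≤ a := hJ
          have h0 := hbot 0 (by omega)
          have hsupp : ∀ r, r < a+1 →
              bDagEntry k a 0 r * extN k (2*p) w (2*p-a-2+1+r) =
              (if r = a+1 then bDagEntry k a 0 (a+1) * extN k (2*p) w (2*p-a-2+1+(a+1)) else 0) +
              ((if r = 0 then bDagEntry k a 0 0 * extN k (2*p) w (2*p-a-2+1+0) else 0) +
               (if r = 0+1 then bDagEntry k a 0 (0+1) * extN k (2*p) w (2*p-a-2+1+(0+1)) else 0)) := by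
            intro r hr
            by_cases h1 : r = 0
            · rw [if_neg (by omega), if_pos h1, if_neg (by omega), h1]; ring
            by_cases h2 : r = 0+1
            · rw [if_neg (by omega), if_neg (by omega), if_pos h2, h2]; ring
            rw [if_neg (by omega), if_neg h1, if_neg h2,
              bDag_zero k a (by omega) (by omega) (by omega), zero_mul]
            ring
          rw [sum_ite_three _ _ _ _ _ hsupp, if_neg (by omega), if_pos (by omega),
            if_pos (by omega), bDag_diag, bDag_sup] at h0
          rw [Nat.choose_one_right]
          have c2 := congrArg (fun z : ℤ => (z : MvPolynomial (Fin 2) k)) (rfl : ((0:ℕ):ℤ) = 0)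
          push_cast at h0
          simp only [map_natCast]
          linear_combination (-1 : MvPolynomial (Fin 2) k) * h0
        | (q+2), hJ, IH =>
          have hq1 : q + 1 < a := by omega
          have h0 := hbot (q+1) (by omega)
          have hsupp : ∀ r, r < a+1 →
              bDagEntry k a (q+1) r * extN k (2*p) w (2*p-a-2+1+r) =
              (if r = q then bDagEntry k a (q+1) q * extN k (2*p) w (2*p-a-2+1+q) else 0) +
              ((if r = q+1 then bDagEntry k a (q+1) (q+1) * extN k (2*p) w (2*p-a-2+1+(q+1)) else 0) +
               (if r = (q+1)+1 then bDagEntry k a (q+1) ((q+1)+1) * extN k (2*p) w (2*p-a-2+1+((q+1)+1)) else 0)) := by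
            intro r hr
            by_cases h1 : r = q
            · rw [if_pos h1, if_neg (by omega), if_neg (by omega), h1]; ring
            by_cases h2 : r = q+1
            · rw [if_neg (by omega), if_pos h2, if_neg (by omega), h2]; ring
            by_cases h3 : r = (q+1)+1
            · rw [if_neg (by omega), if_neg (by omega), if_pos h3, h3]; ring
            rw [if_neg h1, if_neg h2, if_neg h3,
              bDag_zero k a (by omega) (by omega) (by omega), zero_mul]
            ring
          rw [sum_ite_three _ _ _ _ _ hsupp, if_pos (by omega), if_pos (by omega),
            if_pos (by omega), bDag_sub, bDag_diag, bDag_sup] at h0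
          have ih1 := IH (q+1) (by omega) (by omega)
          have ih2 := IH q (by omega) (by omega)
          have f1 := congrArg (fun z : ℤ => (z : MvPolynomial (Fin 2) k)) (choose_fact a (q+1))
          have f2 := congrArg (fun z : ℤ => (z : MvPolynomial (Fin 2) k)) (choose_fact a q)
          push_cast at f1 f2 h0
          simp only [map_natCast] at ih1 ih2 ⊢
          have hne : ((q+2 : ℕ) : MvPolynomial (Fin 2) k) ≠ 0 := by
            intro hc
            have := (CharP.cast_eq_zero_iff (MvPolynomial (Fin 2) k) p (q+2)).mp hc
            have := Nat.le_of_dvd (by omega) this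
            omega
          apply mul_left_cancel₀ hne
          push_cast
          linear_combination (-(X 0^(q+1) : MvPolynomial (Fin 2) k)) * h0
            + (((a : MvPolynomial (Fin 2) k) - 2*(q:MvPolynomial (Fin 2) k) - 2) * X 1) * ih1
            + (((a : MvPolynomial (Fin 2) k) - (q:MvPolynomial (Fin 2) k)) * X 1^2) * ih2
            - (X 0 * X 1^(q+2) * extN k (2*p) w (2*p-a-2+1+0)) * f1
            - (X 0 * X 1^(q+2) * extN k (2*p) w (2*p-a-2+1+0)) * f2
    -- all bottom coordinates vanish
    have hc0 : extN k (2*p) w (2*p-a-2+1+0) = 0 := by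
      have h1 := hcJ a le_rfl
      rw [hca] at h1
      rw [Nat.choose_self] at h1
      simp only [mul_zero, Nat.cast_one, map_one, one_mul] at h1
      have h2 := h1.symm
      rcases mul_eq_zero.mp h2 with h3 | h3
      · rcases mul_eq_zero.mp h3 with h4 | h4
        · exact absurd h4 (X_ne_zero _)
        · exact absurd h4 (pow_ne_zero _ (X_ne_zero _))
      · exact h3
    have hctail : ∀ j, 2*p-a-2+1 ≤ j → extN k (2*p) w j = 0 := by
      intro j h1
      rcases lt_or_ge j (2*p) with h2 | h2
      · obtain ⟨J, rfl⟩ : ∃ J, j = 2*p-a-2+1+J := ⟨j - (2*p-a-2+1), by omega⟩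
        have h3 := hcJ J (by omega)
        rw [hc0, mul_zero, mul_zero] at h3
        rcases mul_eq_zero.mp h3 with h4 | h4
        · exact absurd h4 (pow_ne_zero _ (X_ne_zero _))
        · exact h4
      · exact extN_ge k w h2
    -- build the preimage
    refine Submodule.mem_map.mpr
      ⟨fun J => w ⟨(J:ℕ), lt_of_lt_of_le J.2 hN2p⟩, ?_, ?_⟩
    · rw [LinearMap.mem_ker, Matrix.mulVecLin_apply]
      funext I
      rw [mulVec_row k (Bmat k (2*p-a-2)) (bEntry k (2*p-a-2)) (fun _ _ => rfl) _ I]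
      have hVW : ∀ j, j < 2*p-a-2+1 →
          extN k (2*p-a-2+1) (fun J : Fin (2*p-a-2+1) => w ⟨(J:ℕ), lt_of_lt_of_le J.2 hN2p⟩) j
            = extN k (2*p) w j := by
        intro j hj
        rw [extN, extN, dif_pos hj, dif_pos (by omega : j < 2*p)]
      rw [Finset.sum_congr rfl (fun j hj => by
        rw [hVW j (Finset.mem_range.mp hj),
          ← dEntry_tl k I.2 (Finset.mem_range.mp hj)])]
      rw [Finset.sum_subset (Finset.range_subset_range.mpr hN2p) (fun x hx hnx => by
        rw [hctail x (by simpa using hnx), mul_zero])]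
      exact hrowN ↑I (by omega)
    · funext i
      rw [hpad]
      by_cases h : (i:ℕ) < 2*p-a-2+1
      · rw [dif_pos h]
      · rw [dif_neg h]
        have h2 := hctail ↑i (by omega)
        rw [extN_coe] at h2
        exact h2.symm
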